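/- Let d ≥ 1, a ∈ (0,1), p ∈ [1,∞), L ≥ 0 and t ≥ 0. Let ψ : ℝ^d → ℝ^d be a homeomorphism preserving Lebesgue measure and satisfying e^{−Lt}|x − y| ≤ |ψ(x) − ψ(y)| ≤ e^{Lt}|x − y| for all x, y ∈ ℝ^d. There is a constant C depending only on d, a and p such that: if u₀ ∈ L^p_loc(ℝ^d) satisfies (|B|^{−1−ap/d} ∫_B |u₀ − av_B u₀|^p)^{1/p} ≤ N for every ball B ⊂ ℝ^d, then the function u := u₀ ∘ ψ⁻¹ satisfies (|B|^{−1−ap/d} ∫_B |u − av_B u|^p)^{1/p} ≤ C·e^{aLt}·N for every ball B ⊂ ℝ^d. -/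

import Mathlib

open Metric MeasureTheory Filter ENNReal

section aux

-- real arithmetic: unfold the Campanato seminorm bound
lemma aux_unfold {V I N p e : ℝ} (hV : 0 < V) (hI : 0 ≤ I) (hp : 1 ≤ p) (hN : 0 ≤ N)
    (h : (V ^ (-e) * I) ^ (1 / p) ≤ N) : I ≤ N ^ p * V ^ e := by
  have hp0 : (0:ℝ) < p := lt_of_lt_of_le one_pos hp
  have hx : (0:ℝ) ≤ V ^ (-e) * I := mul_nonneg (Real.rpow_nonneg hV.le _) hI
  have h2 : V ^ (-e) * I ≤ N ^ p := by
    have := Real.rpow_le_rpow (Real.rpow_nonneg hx _) h hp0.le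
    rwa [one_div, Real.rpow_inv_rpow hx hp0.ne'] at this
  have hVe : (0:ℝ) < V ^ e := Real.rpow_pos_of_pos hV _
  rw [Real.rpow_neg hV.le] at h2
  calc I = (V ^ e)⁻¹ * I * V ^ e := by field_simp
    _ ≤ N ^ p * V ^ e := by
        exact mul_le_mul_of_nonneg_right h2 hVe.le

-- Jensen: |⨍ f|^p ≤ ⨍ |f|^p
lemma aux_jensen {α : Type*} [MeasurableSpace α] {μ : Measure α} [IsFiniteMeasure μ] [NeZero μ]
    {f : α → ℝ} {p : ℝ} (hp : 1 ≤ p) (hf : MemLp f (ENNReal.ofReal p) μ) :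
    |⨍ x, f x ∂μ| ^ p ≤ ⨍ x, |f x| ^ p ∂μ := by
  have hp0 : (0:ℝ) < p := lt_of_lt_of_le one_pos hp
  have h1 : (1:ℝ≥0∞) ≤ ENNReal.ofReal p := by
    rw [ENNReal.one_le_ofReal]; exact hp
  have hfi : Integrable f μ := hf.integrable h1
  have hfip : Integrable (fun x => |f x| ^ p) μ := by
    have := hf.integrable_norm_rpow (by simp [hp0]) ENNReal.ofReal_ne_top
    simpa [Real.norm_eq_abs, ENNReal.toReal_ofReal hp0.le] using this
  have habs : |⨍ x, f x ∂μ| ≤ ⨍ x, |f x| ∂μ := by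
    rw [average_eq', average_eq']
    exact (norm_integral_le_integral_norm f)
  have hJ : (⨍ x, |f x| ∂μ) ^ p ≤ ⨍ x, |f x| ^ p ∂μ := by
    have hcvx : ConvexOn ℝ (Set.Ici 0) (fun x : ℝ => x ^ p) := convexOn_rpow hp
    have := hcvx.map_average_le (Real.continuous_rpow_const hp0.le).continuousOn isClosed_Ici
      (Filter.Eventually.of_forall (fun x => abs_nonneg (f x))) hfi.abs (by exact hfip)
    simpa using this
  calc |⨍ x, f x ∂μ| ^ p ≤ (⨍ x, |f x| ∂μ) ^ p :=
        Real.rpow_le_rpow (abs_nonneg _) habs hp0.le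
    _ ≤ ⨍ x, |f x| ^ p ∂μ := hJ

end aux

section balls

variable {d : ℕ} {a p N : ℝ} {u₀ : EuclideanSpace ℝ (Fin d) → ℝ}

lemma aux_osc (hp : 1 ≤ p) (hN : 0 ≤ N)
    (hbound : ∀ (x : EuclideanSpace ℝ (Fin d)) (r : ℝ), 0 < r →
      ((volume (ball x r)).toReal ^ (-(1 + a * p / d)) *
        ∫ y in ball x r, |u₀ y - ⨍ z in ball x r, u₀ z| ^ p) ^ (1 / p) ≤ N)
    (x : EuclideanSpace ℝ (Fin d)) (r : ℝ) (hr : 0 < r) :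
    ∫ y in ball x r, |u₀ y - ⨍ z in ball x r, u₀ z| ^ p
      ≤ N ^ p * (volume (ball x r)).toReal ^ (1 + a * p / d) := by
  have hV : 0 < (volume (ball x r)).toReal :=
    ENNReal.toReal_pos (measure_ball_pos volume x hr).ne' measure_ball_lt_top.ne
  have hI : 0 ≤ ∫ y in ball x r, |u₀ y - ⨍ z in ball x r, u₀ z| ^ p :=
    integral_nonneg fun y => Real.rpow_nonneg (abs_nonneg _) _
  exact aux_unfold hV hI hp hN (hbound x r hr)

lemma aux_avg_diff (hp : 1 ≤ p) (hN : 0 ≤ N)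
    (hmem : ∀ (x : EuclideanSpace ℝ (Fin d)) (r : ℝ), 0 < r →
      MemLp u₀ (ENNReal.ofReal p) (volume.restrict (ball x r)))
    (hbound : ∀ (x : EuclideanSpace ℝ (Fin d)) (r : ℝ), 0 < r →
      ((volume (ball x r)).toReal ^ (-(1 + a * p / d)) *
        ∫ y in ball x r, |u₀ y - ⨍ z in ball x r, u₀ z| ^ p) ^ (1 / p) ≤ N)
    (y x : EuclideanSpace ℝ (Fin d)) (s r : ℝ) (hs : 0 < s) (hr : 0 < r)
    (hsub : ball y s ⊆ ball x r) :
    |(⨍ z in ball y s, u₀ z) - ⨍ z in ball x r, u₀ z| ^ p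
      ≤ N ^ p * (volume (ball x r)).toReal ^ (1 + a * p / d) /
          (volume (ball y s)).toReal := by
  have hp0 : (0:ℝ) < p := lt_of_lt_of_le one_pos hp
  have h1 : (1:ℝ≥0∞) ≤ ENNReal.ofReal p := by rw [ENNReal.one_le_ofReal]; exact hp
  set c := ⨍ z in ball x r, u₀ z with hc
  set μ₁ := volume.restrict (ball y s) with hμ₁
  haveI : IsFiniteMeasure μ₁ :=
    ⟨by rw [hμ₁, Measure.restrict_apply_univ]; exact measure_ball_lt_top⟩
  haveI : NeZero μ₁ := ⟨by
    rw [hμ₁, Ne, Measure.restrict_eq_zero]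
    exact (measure_ball_pos volume y hs).ne'⟩
  have hV₁ : 0 < (volume (ball y s)).toReal :=
    ENNReal.toReal_pos (measure_ball_pos volume y hs).ne' measure_ball_lt_top.ne
  have hμ₁univ : (μ₁ Set.univ).toReal = (volume (ball y s)).toReal := by
    rw [hμ₁, Measure.restrict_apply_univ]
  have hmem₁ : MemLp (fun z => u₀ z - c) (ENNReal.ofReal p) μ₁ :=
    (hmem y s hs).sub (memLp_const c)
  have key := aux_jensen hp hmem₁
  have hA : (⨍ z, (u₀ z - c) ∂μ₁) = (⨍ z in ball y s, u₀ z) - c := by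
    have hint : Integrable u₀ μ₁ := (hmem y s hs).integrable h1
    rw [average_eq, integral_sub hint (integrable_const c), integral_const, average_eq,
      smul_eq_mul, smul_eq_mul, smul_eq_mul, measureReal_def, hμ₁univ]
    field_simp
    rfl
  rw [hA] at key
  haveI : IsFiniteMeasure (volume.restrict (ball x r)) :=
    ⟨by rw [Measure.restrict_apply_univ]; exact measure_ball_lt_top⟩
  have hIO : IntegrableOn (fun z => |u₀ z - c| ^ p) (ball x r) volume := by
    have := ((hmem x r hr).sub (memLp_const c)).integrable_norm_rpow
      (by simp [hp0]) ENNReal.ofReal_ne_top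
    simpa [Real.norm_eq_abs, ENNReal.toReal_ofReal hp0.le, IntegrableOn] using this
  have hmono : ∫ z in ball y s, |u₀ z - c| ^ p ∂volume ≤ ∫ z in ball x r, |u₀ z - c| ^ p := by
    apply setIntegral_mono_set hIO
    · exact Filter.Eventually.of_forall fun z => Real.rpow_nonneg (abs_nonneg _) _
    · exact Filter.Eventually.of_forall hsub
  have havg : (⨍ z, |u₀ z - c| ^ p ∂μ₁)
      ≤ (volume (ball y s)).toReal⁻¹ * ∫ z in ball x r, |u₀ z - c| ^ p := by
    rw [average_eq, measureReal_def, hμ₁univ, smul_eq_mul]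
    exact mul_le_mul_of_nonneg_left hmono (inv_nonneg.mpr hV₁.le)
  have hosc := aux_osc hp hN hbound x r hr
  calc |(⨍ z in ball y s, u₀ z) - c| ^ p ≤ ⨍ z, |u₀ z - c| ^ p ∂μ₁ := key
    _ ≤ (volume (ball y s)).toReal⁻¹ * ∫ z in ball x r, |u₀ z - c| ^ p := havg
    _ ≤ (volume (ball y s)).toReal⁻¹ *
        (N ^ p * (volume (ball x r)).toReal ^ (1 + a * p / d)) := by
        exact mul_le_mul_of_nonneg_left hosc (inv_nonneg.mpr hV₁.le)
    _ = N ^ p * (volume (ball x r)).toReal ^ (1 + a * p / d) /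
          (volume (ball y s)).toReal := by ring

end balls

section conc

variable {d : ℕ} {a p N : ℝ} {u₀ : EuclideanSpace ℝ (Fin d) → ℝ}

lemma aux_vol (hd : 1 ≤ d) (x : EuclideanSpace ℝ (Fin d)) {r : ℝ} (hr : 0 ≤ r) :
    (volume (ball x r)).toReal
      = (volume (ball (0 : EuclideanSpace ℝ (Fin d)) 1)).toReal * r ^ (d:ℝ) := by
  haveI : Nonempty (Fin d) := ⟨⟨0, hd⟩⟩
  rw [Measure.addHaar_ball volume x hr, ENNReal.toReal_mul,
    ENNReal.toReal_ofReal (pow_nonneg hr _), finrank_euclideanSpace_fin,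
    ← Real.rpow_natCast]
  ring

/-- The constant in the dyadic average-difference estimate. -/
noncomputable def auxK (d : ℕ) (a p : ℝ) : ℝ :=
  ((volume (ball (0 : EuclideanSpace ℝ (Fin d)) 1)).toReal * 2 ^ (d:ℝ))
      ^ ((1 + a * p / d) / p) *
    ((volume (ball (0 : EuclideanSpace ℝ (Fin d)) 1)).toReal) ^ (-(1 / p))

lemma auxK_pos : 0 < auxK d a p := by
  have hω : 0 < (volume (ball (0 : EuclideanSpace ℝ (Fin d)) 1)).toReal :=
    ENNReal.toReal_pos (measure_ball_pos volume _ one_pos).ne' measure_ball_lt_top.ne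
  have h2 : (0:ℝ) < 2 ^ (d:ℝ) := Real.rpow_pos_of_pos two_pos _
  exact mul_pos (Real.rpow_pos_of_pos (mul_pos hω h2) _) (Real.rpow_pos_of_pos hω _)

lemma aux_avg_diff2 (hd : 1 ≤ d) (ha : 0 < a) (hp : 1 ≤ p) (hN : 0 ≤ N)
    (hmem : ∀ (x : EuclideanSpace ℝ (Fin d)) (r : ℝ), 0 < r →
      MemLp u₀ (ENNReal.ofReal p) (volume.restrict (ball x r)))
    (hbound : ∀ (x : EuclideanSpace ℝ (Fin d)) (r : ℝ), 0 < r →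
      ((volume (ball x r)).toReal ^ (-(1 + a * p / d)) *
        ∫ y in ball x r, |u₀ y - ⨍ z in ball x r, u₀ z| ^ p) ^ (1 / p) ≤ N)
    (y z : EuclideanSpace ℝ (Fin d)) (ρ : ℝ) (hρ : 0 < ρ)
    (hsub : ball y ρ ⊆ ball z (2 * ρ)) :
    |(⨍ w in ball y ρ, u₀ w) - ⨍ w in ball z (2 * ρ), u₀ w| ≤ auxK d a p * N * ρ ^ a := by
  have hp0 : (0:ℝ) < p := lt_of_lt_of_le one_pos hp
  have hd0 : ((d:ℝ)) ≠ 0 := by positivity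
  set ω := (volume (ball (0 : EuclideanSpace ℝ (Fin d)) 1)).toReal with hωdef
  have hω : 0 < ω :=
    ENNReal.toReal_pos (measure_ball_pos volume _ one_pos).ne' measure_ball_lt_top.ne
  have h2 : (0:ℝ) < 2 ^ (d:ℝ) := Real.rpow_pos_of_pos two_pos _
  have hρd : (0:ℝ) < ρ ^ (d:ℝ) := Real.rpow_pos_of_pos hρ _
  set e := 1 + a * p / d with he
  have key := aux_avg_diff hp hN hmem hbound y z ρ (2*ρ) hρ (by positivity) hsub
  have hVsmall : (volume (ball y ρ)).toReal = ω * ρ ^ (d:ℝ) := aux_vol hd y hρ.le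
  have hVbig : (volume (ball z (2*ρ))).toReal = ω * 2 ^ (d:ℝ) * ρ ^ (d:ℝ) := by
    rw [aux_vol hd z (by positivity), Real.mul_rpow (by norm_num) hρ.le]; ring
  rw [hVsmall, hVbig] at key
  have hRHSeq : N ^ p * (ω * 2 ^ (d:ℝ) * ρ ^ (d:ℝ)) ^ e / (ω * ρ ^ (d:ℝ))
      = (auxK d a p * N * ρ ^ a) ^ p := by
    have h1 : (ω * 2 ^ (d:ℝ) * ρ ^ (d:ℝ)) ^ e
        = (ω * 2 ^ (d:ℝ)) ^ e * (ρ ^ (d:ℝ)) ^ e :=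
      Real.mul_rpow (by positivity) (by positivity)
    have h2' : (ρ ^ (d:ℝ)) ^ e = ρ ^ (d:ℝ) * ρ ^ (a*p) := by
      rw [← Real.rpow_mul hρ.le, ← Real.rpow_add hρ]
      congr 1
      field_simp [he]
      rw [he]; field_simp
    have h3 : (auxK d a p * N * ρ ^ a) ^ p
        = (ω * 2 ^ (d:ℝ)) ^ e * ω⁻¹ * N ^ p * ρ ^ (a*p) := by
      rw [Real.mul_rpow (mul_nonneg (auxK_pos (d := d) (a := a) (p := p)).le hN)
          (Real.rpow_nonneg hρ.le _),
        Real.mul_rpow (auxK_pos (d := d) (a := a) (p := p)).le hN,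
        ← Real.rpow_mul hρ.le]
      unfold auxK
      rw [Real.mul_rpow (Real.rpow_nonneg (by positivity) _) (Real.rpow_nonneg hω.le _),
        ← Real.rpow_mul (by positivity), ← Real.rpow_mul hω.le]
      rw [div_mul_cancel₀ _ hp0.ne', neg_mul, one_div, inv_mul_cancel₀ hp0.ne',
        Real.rpow_neg_one, ← hωdef, ← he]
    rw [h1, h2', h3]
    field_simp
  rw [hRHSeq] at key
  have habs : (0:ℝ) ≤ |(⨍ w in ball y ρ, u₀ w) - ⨍ w in ball z (2 * ρ), u₀ w| := abs_nonneg _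
  have hKN : (0:ℝ) ≤ auxK d a p * N * ρ ^ a :=
    mul_nonneg (mul_nonneg auxK_pos.le hN) (Real.rpow_nonneg hρ.le _)
  exact (Real.rpow_le_rpow_iff habs hKN hp0).mp key

end conc

section pointwise

variable {d : ℕ} {a p N : ℝ} {u₀ : EuclideanSpace ℝ (Fin d) → ℝ}

lemma aux_ball_closedBall (hd : 1 ≤ d) (y : EuclideanSpace ℝ (Fin d)) (ρ : ℝ)
    (f : EuclideanSpace ℝ (Fin d) → ℝ) :
    ⨍ z in ball y ρ, f z = ⨍ z in closedBall y ρ, f z := by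
  haveI : Nonempty (Fin d) := ⟨⟨0, hd⟩⟩
  have hvol : volume (closedBall y ρ) = volume (ball y ρ) :=
    Measure.addHaar_closedBall_eq_addHaar_ball volume y ρ
  have hae : ball y ρ =ᵐ[volume] closedBall y ρ := by
    rw [MeasureTheory.ae_eq_set]
    constructor
    · rw [Set.diff_eq_empty.mpr ball_subset_closedBall]; exact measure_empty
    · rw [closedBall_diff_ball]; exact Measure.addHaar_sphere volume y ρ
  rw [setAverage_eq, setAverage_eq, measureReal_def, measureReal_def, hvol, setIntegral_congr_set hae]

/-- Constant in the pointwise Campanato estimate. -/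
noncomputable def auxC1 (d : ℕ) (a p : ℝ) : ℝ :=
  auxK d a p * 2 ^ a * (1 - 2 ^ (-a))⁻¹ + auxK d a p

lemma auxC1_pos (ha : 0 < a) : 0 < auxC1 d a p := by
  have h1 : (2:ℝ) ^ (-a) < 1 :=
    Real.rpow_lt_one_of_one_lt_of_neg one_lt_two (neg_lt_zero.mpr ha)
  have : (0:ℝ) < 1 - 2 ^ (-a) := by linarith
  have hK := auxK_pos (d := d) (a := a) (p := p)
  have h2a : (0:ℝ) < 2 ^ a := Real.rpow_pos_of_pos two_pos _
  unfold auxC1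
  positivity

lemma aux_pointwise (hd : 1 ≤ d) (ha : 0 < a) (hp : 1 ≤ p) (hN : 0 ≤ N)
    (hmem : ∀ (x : EuclideanSpace ℝ (Fin d)) (r : ℝ), 0 < r →
      MemLp u₀ (ENNReal.ofReal p) (volume.restrict (ball x r)))
    (hbound : ∀ (x : EuclideanSpace ℝ (Fin d)) (r : ℝ), 0 < r →
      ((volume (ball x r)).toReal ^ (-(1 + a * p / d)) *
        ∫ y in ball x r, |u₀ y - ⨍ z in ball x r, u₀ z| ^ p) ^ (1 / p) ≤ N)
    (y₀ : EuclideanSpace ℝ (Fin d)) (R : ℝ) (hR : 0 < R)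
    (y : EuclideanSpace ℝ (Fin d)) (hy : y ∈ ball y₀ R)
    (hleb : Filter.Tendsto (fun ρ => ⨍ z in closedBall y ρ, u₀ z)
      (nhdsWithin 0 (Set.Ioi 0)) (nhds (u₀ y))) :
    |u₀ y - ⨍ z in ball y₀ R, u₀ z| ≤ auxC1 d a p * N * R ^ a := by
  set K := auxK d a p with hK
  have hKpos : 0 < K := auxK_pos
  set q := (2:ℝ) ^ (-a) with hqdef
  have hq0 : 0 < q := Real.rpow_pos_of_pos two_pos _
  have hq1 : q < 1 := Real.rpow_lt_one_of_one_lt_of_neg one_lt_two (neg_lt_zero.mpr ha)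
  set f : ℕ → ℝ := fun k => ⨍ z in ball y (2 * R / 2 ^ k), u₀ z with hf
  have hrad : ∀ k : ℕ, (0:ℝ) < 2 * R / 2 ^ k := fun k => by positivity
  -- step estimate
  have hstep : ∀ k : ℕ, dist (f k) (f (k + 1)) ≤ (K * N * (2 * R) ^ a) * q ^ k := by
    intro k
    have hrad' : (0:ℝ) < 2 * R / 2 ^ (k + 1) := hrad (k + 1)
    have hdouble : 2 * (2 * R / 2 ^ (k + 1)) = 2 * R / 2 ^ k := by
      rw [pow_succ]; field_simp
    have hsub : ball y (2 * R / 2 ^ (k + 1)) ⊆ ball y (2 * (2 * R / 2 ^ (k + 1))) :=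
      ball_subset_ball (by linarith)
    have h := aux_avg_diff2 hd ha hp hN hmem hbound y y (2 * R / 2 ^ (k + 1)) hrad' hsub
    rw [hdouble] at h
    rw [Real.dist_eq, abs_sub_comm]
    refine le_trans h ?_
    -- (2R/2^(k+1))^a ≤ (2R)^a * q^k
    have h1 : (2 * R / 2 ^ (k + 1) : ℝ) ≤ 2 * R * (2⁻¹ : ℝ) ^ k := by
      rw [pow_succ]
      rw [div_le_iff₀ (by positivity)]
      have : (2:ℝ) * R * 2⁻¹ ^ k * (2 ^ k * 2) = 2 * R * 2 := by
        rw [inv_pow]; field_simp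
      rw [this]
      nlinarith
    have h2 : (2 * R / 2 ^ (k + 1) : ℝ) ^ a ≤ (2 * R) ^ a * q ^ k := by
      have hle := Real.rpow_le_rpow hrad'.le h1 ha.le
      refine le_trans hle ?_
      rw [Real.mul_rpow (by positivity) (by positivity)]
      refine le_of_eq ?_
      congr 1
      rw [hqdef, ← Real.rpow_natCast ((2:ℝ) ^ (-a)) k,
        ← Real.rpow_mul (by norm_num : (0:ℝ) ≤ 2),
        ← Real.rpow_natCast (2⁻¹ : ℝ) k, Real.inv_rpow (by norm_num : (0:ℝ) ≤ 2),
        ← Real.rpow_neg (by norm_num : (0:ℝ) ≤ 2),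
        ← Real.rpow_mul (by norm_num : (0:ℝ) ≤ 2)]
      congr 1
      ring
    calc K * N * (2 * R / 2 ^ (k + 1)) ^ a ≤ K * N * ((2 * R) ^ a * q ^ k) :=
          mul_le_mul_of_nonneg_left h2 (by positivity)
      _ = K * N * (2 * R) ^ a * q ^ k := by ring
  -- convergence
  have htend : Filter.Tendsto f Filter.atTop (nhds (u₀ y)) := by
    have heq : ∀ k : ℕ, f k = ⨍ z in closedBall y (2 * R / 2 ^ k), u₀ z := fun k =>
      aux_ball_closedBall hd y _ u₀
    have hrtend : Filter.Tendsto (fun k : ℕ => 2 * R / 2 ^ k) Filter.atTop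
        (nhdsWithin 0 (Set.Ioi 0)) := by
      apply tendsto_nhdsWithin_of_tendsto_nhds_of_eventually_within
      · have h0 : Filter.Tendsto (fun k : ℕ => (2 * R) * (2⁻¹ : ℝ) ^ k) Filter.atTop
            (nhds 0) := by
          simpa using (tendsto_pow_atTop_nhds_zero_of_lt_one (by norm_num : (0:ℝ) ≤ 2⁻¹)
            (by norm_num : (2⁻¹:ℝ) < 1)).const_mul (2 * R)
        have hfun : (fun k : ℕ => 2 * R / 2 ^ k) = fun k : ℕ => (2 * R) * (2⁻¹ : ℝ) ^ k := by
          funext k; rw [inv_pow]; ring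
        rw [hfun]; exact h0
      · exact Filter.Eventually.of_forall fun k => hrad k
    have hfeq : f = fun k : ℕ => ⨍ z in closedBall y (2 * R / 2 ^ k), u₀ z := funext heq
    rw [hfeq]
    exact hleb.comp hrtend
  have hsum : Summable (fun k : ℕ => (K * N * (2 * R) ^ a) * q ^ k) :=
    (summable_geometric_of_lt_one hq0.le hq1).mul_left _
  have hdist0 : dist (f 0) (u₀ y) ≤ (K * N * (2 * R) ^ a) * (1 - q)⁻¹ := by
    have h := dist_le_tsum_of_dist_le_of_tendsto₀ _ hstep hsum htend
    rwa [tsum_mul_left, tsum_geometric_of_lt_one hq0.le hq1] at h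
  have hinit : |(⨍ z in ball y₀ R, u₀ z) - f 0| ≤ K * N * R ^ a := by
    have hsub : ball y₀ R ⊆ ball y (2 * R) := by
      apply ball_subset_ball'
      have hdy : dist y₀ y < R := by rw [dist_comm]; exact mem_ball.mp hy
      linarith
    have h := aux_avg_diff2 hd ha hp hN hmem hbound y₀ y R hR hsub
    have h0 : f 0 = ⨍ z in ball y (2 * R), u₀ z := by
      simp only [hf, pow_zero, div_one]
    rw [h0]
    exact h
  have htri : |u₀ y - ⨍ z in ball y₀ R, u₀ z|
      ≤ |u₀ y - f 0| + |f 0 - ⨍ z in ball y₀ R, u₀ z| := abs_sub_le _ _ _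
  have h1 : |u₀ y - f 0| ≤ K * N * (2 * R) ^ a * (1 - q)⁻¹ := by
    rw [abs_sub_comm, ← Real.dist_eq]
    exact hdist0
  have h2 : |f 0 - ⨍ z in ball y₀ R, u₀ z| ≤ K * N * R ^ a := by
    rw [abs_sub_comm]
    exact hinit
  have h2R : (2 * R : ℝ) ^ a = 2 ^ a * R ^ a := Real.mul_rpow (by norm_num) hR.le
  calc |u₀ y - ⨍ z in ball y₀ R, u₀ z|
      ≤ K * N * (2 * R) ^ a * (1 - q)⁻¹ + K * N * R ^ a := by linarith
    _ = auxC1 d a p * N * R ^ a := by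
        rw [h2R]
        unfold auxC1
        rw [← hK, ← hqdef]
        ring

end pointwise

section leb

variable {d : ℕ} {p : ℝ} {u₀ : EuclideanSpace ℝ (Fin d) → ℝ}

lemma aux_locint (hp : 1 ≤ p)
    (hmem : ∀ (x : EuclideanSpace ℝ (Fin d)) (r : ℝ), 0 < r →
      MemLp u₀ (ENNReal.ofReal p) (volume.restrict (ball x r))) :
    LocallyIntegrable u₀ (volume : Measure (EuclideanSpace ℝ (Fin d))) := by
  rw [locallyIntegrable_iff]
  intro k hk
  obtain ⟨rr, hrr⟩ := hk.isBounded.subset_closedBall 0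
  have hrr' : k ⊆ ball (0 : EuclideanSpace ℝ (Fin d)) (max rr 0 + 1) :=
    hrr.trans ((closedBall_subset_closedBall (le_max_left _ _)).trans
      (closedBall_subset_ball (lt_add_one _)))
  have hpos : (0:ℝ) < max rr 0 + 1 := by positivity
  haveI : IsFiniteMeasure
      (volume.restrict (ball (0 : EuclideanSpace ℝ (Fin d)) (max rr 0 + 1))) :=
    ⟨by rw [Measure.restrict_apply_univ]; exact measure_ball_lt_top⟩
  have h1 : (1:ℝ≥0∞) ≤ ENNReal.ofReal p := by rw [ENNReal.one_le_ofReal]; exact hp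
  exact IntegrableOn.mono_set ((hmem 0 _ hpos).integrable h1) hrr'

lemma aux_leb (hp : 1 ≤ p)
    (hmem : ∀ (x : EuclideanSpace ℝ (Fin d)) (r : ℝ), 0 < r →
      MemLp u₀ (ENNReal.ofReal p) (volume.restrict (ball x r))) :
    ∀ᵐ y ∂(volume : Measure (EuclideanSpace ℝ (Fin d))),
      Filter.Tendsto (fun ρ => ⨍ z in closedBall y ρ, u₀ z)
        (nhdsWithin 0 (Set.Ioi 0)) (nhds (u₀ y)) := by
  have hloc := aux_locint hp hmem
  filter_upwards [(Besicovitch.vitaliFamily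
      (volume : Measure (EuclideanSpace ℝ (Fin d)))).ae_tendsto_average hloc] with z hz
  exact hz.comp (Besicovitch.tendsto_filterAt volume z)

end leb

/-- Hölder (`Lip_p(a)`) estimate for the solution `u = u₀ ∘ ψ⁻¹` of a transport equation along
a measure-preserving flow map `ψ` satisfying `e^{−Lt}|x−y| ≤ |ψ(x)−ψ(y)| ≤ e^{Lt}|x−y|`:
if `u₀` has `Lip_p(a)` seminorm at most `N` then `u` has `Lip_p(a)` seminorm at most
`C·e^{aLt}·N`, with `C` depending only on `d`, `a` and `p`. -/
theorem stmt19 (d : ℕ) (hd : 1 ≤ d) (a : ℝ) (ha : a ∈ Set.Ioo (0 : ℝ) 1)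
    (p : ℝ) (hp : 1 ≤ p) :
    ∃ C : ℝ, 0 < C ∧
      ∀ (L t : ℝ), 0 ≤ L → 0 ≤ t →
      ∀ (ψ : EuclideanSpace ℝ (Fin d) → EuclideanSpace ℝ (Fin d)),
        Function.Bijective ψ →
        MeasurePreserving ψ volume volume →
        (∀ x y, Real.exp (-(L * t)) * dist x y ≤ dist (ψ x) (ψ y) ∧
          dist (ψ x) (ψ y) ≤ Real.exp (L * t) * dist x y) →
        ∀ (u₀ : EuclideanSpace ℝ (Fin d) → ℝ) (N : ℝ), 0 ≤ N →
          (∀ (x : EuclideanSpace ℝ (Fin d)) (r : ℝ), 0 < r →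
            MemLp u₀ (ENNReal.ofReal p) (volume.restrict (ball x r))) →
          (∀ (x : EuclideanSpace ℝ (Fin d)) (r : ℝ), 0 < r →
            ((volume (ball x r)).toReal ^ (-(1 + a * p / d)) *
              ∫ y in ball x r, |u₀ y - ⨍ z in ball x r, u₀ z| ^ p) ^ (1 / p) ≤ N) →
          ∀ (x : EuclideanSpace ℝ (Fin d)) (r : ℝ), 0 < r →
            ((volume (ball x r)).toReal ^ (-(1 + a * p / d)) *
              ∫ y in ball x r,
                |u₀ (Function.invFun ψ y) -
                  ⨍ z in ball x r, u₀ (Function.invFun ψ z)| ^ p) ^ (1 / p)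
              ≤ C * Real.exp (a * L * t) * N := by
  obtain ⟨ha0, ha1⟩ := ha
  have hp0 : (0:ℝ) < p := lt_of_lt_of_le one_pos hp
  have hd0 : ((d:ℝ)) ≠ 0 := by positivity
  set ω := (volume (ball (0 : EuclideanSpace ℝ (Fin d)) 1)).toReal with hωdef
  have hω : 0 < ω :=
    ENNReal.toReal_pos (measure_ball_pos volume _ one_pos).ne' measure_ball_lt_top.ne
  set C1 := auxC1 d a p with hC1def
  have hC1 : 0 < C1 := auxC1_pos ha0
  have hωa : (0:ℝ) < ω ^ (-(a / (d:ℝ))) := Real.rpow_pos_of_pos hω _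
  refine ⟨2 * C1 * ω ^ (-(a / (d:ℝ))), by positivity, ?_⟩
  intro L t hL ht ψ hbij hmp hlip u₀ N hN hmem hbound x r hr
  -- the inverse map
  set φ := Function.invFun ψ with hφdef
  have hψφ : ∀ z, ψ (φ z) = z := fun z => Function.rightInverse_invFun hbij.2 z
  have hφψ : ∀ z, φ (ψ z) = z := fun z => Function.leftInverse_invFun hbij.1 z
  have hlipφ : ∀ z w, dist (φ z) (φ w) ≤ Real.exp (L * t) * dist z w := by
    intro z w
    have h := (hlip (φ z) (φ w)).1
    rw [hψφ, hψφ] at h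
    calc dist (φ z) (φ w)
        = Real.exp (L * t) * (Real.exp (-(L * t)) * dist (φ z) (φ w)) := by
          rw [← mul_assoc, ← Real.exp_add]; simp
      _ ≤ Real.exp (L * t) * dist z w :=
          mul_le_mul_of_nonneg_left h (Real.exp_pos _).le
  have hcontψ : Continuous ψ := by
    apply LipschitzWith.continuous (K := Real.toNNReal (Real.exp (L * t)))
    apply LipschitzWith.of_dist_le_mul
    intro z w
    rw [Real.coe_toNNReal _ (Real.exp_pos _).le]
    exact (hlip z w).2
  have hcontφ : Continuous φ := by
    apply LipschitzWith.continuous (K := Real.toNNReal (Real.exp (L * t)))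
    apply LipschitzWith.of_dist_le_mul
    intro z w
    rw [Real.coe_toNNReal _ (Real.exp_pos _).le]
    exact hlipφ z w
  set e : EuclideanSpace ℝ (Fin d) ≃ᵐ EuclideanSpace ℝ (Fin d) :=
    { toFun := ψ, invFun := φ,
      left_inv := Function.leftInverse_invFun hbij.1,
      right_inv := Function.rightInverse_invFun hbij.2,
      measurable_toFun := hcontψ.measurable,
      measurable_invFun := hcontφ.measurable } with he
  have hmpφ : MeasurePreserving φ (volume : Measure (EuclideanSpace ℝ (Fin d))) volume := by
    have h1 : MeasurePreserving (⇑e) volume volume := hmp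
    exact (MeasurePreserving.symm e h1 : _)
  -- geometry
  have hexp1 : (1:ℝ) ≤ Real.exp (L * t) := Real.one_le_exp (by positivity)
  set R := Real.exp (L * t) * r with hRdef
  have hRpos : 0 < R := by positivity
  set y₀ := φ x with hy₀
  set c := ⨍ z in ball y₀ R, u₀ z with hc
  set M := C1 * N * R ^ a with hM
  have hMnn : 0 ≤ M := by positivity
  have hmemball : ∀ y ∈ ball x r, φ y ∈ ball y₀ R := by
    intro y hy
    rw [mem_ball] at hy ⊢
    calc dist (φ y) y₀ ≤ Real.exp (L * t) * dist y x := hlipφ y x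
      _ < Real.exp (L * t) * r :=
          mul_lt_mul_of_pos_left hy (Real.exp_pos _)
  -- a.e. pointwise bound
  have hae := aux_leb hp hmem
  have haeφ : ∀ᵐ y ∂(volume : Measure (EuclideanSpace ℝ (Fin d))),
      Filter.Tendsto (fun ρ => ⨍ z in closedBall (φ y) ρ, u₀ z)
        (nhdsWithin 0 (Set.Ioi 0)) (nhds (u₀ (φ y))) := by
    rw [MeasureTheory.ae_iff] at hae ⊢
    exact hmpφ.quasiMeasurePreserving.preimage_null hae
  have hptwise : ∀ᵐ y ∂(volume.restrict (ball x r)), |u₀ (φ y) - c| ≤ M := by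
    filter_upwards [ae_restrict_of_ae haeφ, ae_restrict_mem measurableSet_ball] with y h1 h2
    exact aux_pointwise hd ha0 hp hN hmem hbound y₀ R hRpos (φ y) (hmemball y h2) h1
  haveI : IsFiniteMeasure (volume.restrict (ball x r)) :=
    ⟨by rw [Measure.restrict_apply_univ]; exact measure_ball_lt_top⟩
  have hV : 0 < (volume (ball x r)).toReal :=
    ENNReal.toReal_pos (measure_ball_pos volume x hr).ne' measure_ball_lt_top.ne
  set A' := ⨍ z in ball x r, u₀ (φ z) with hA'
  -- the average of u₀ ∘ φ is close to c
  have hAc : |A' - c| ≤ M := by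
    have hmeas : AEStronglyMeasurable (fun z => u₀ (φ z)) (volume.restrict (ball x r)) :=
      ((aux_locint hp hmem).aestronglyMeasurable.comp_quasiMeasurePreserving
        hmpφ.quasiMeasurePreserving).restrict
    have hint : Integrable (fun z => u₀ (φ z)) (volume.restrict (ball x r)) := by
      apply Integrable.mono' (integrable_const (M + |c|)) hmeas
      filter_upwards [hptwise] with y hy
      rw [Real.norm_eq_abs]
      have habs := abs_add_le (u₀ (φ y) - c) c
      simp only [sub_add_cancel] at habs
      linarith
    have hAeq : A' - c = ⨍ z in ball x r, (u₀ (φ z) - c) := by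
      rw [hA', setAverage_eq, setAverage_eq,
        integral_sub hint (integrable_const c), integral_const, smul_eq_mul, smul_eq_mul,
        smul_eq_mul, measureReal_restrict_apply_univ]
      field_simp
      rw [sub_div, mul_div_cancel_left₀ c (ne_of_gt hV : volume.real (ball x r) ≠ 0)]
    rw [hAeq]
    have hnorm : ‖∫ z in ball x r, (u₀ (φ z) - c) ∂volume‖
        ≤ M * (volume (ball x r)).toReal := by
      have h := norm_integral_le_of_norm_le_const (μ := volume.restrict (ball x r))
        (f := fun z => u₀ (φ z) - c) (C := M) ?_
      · rwa [measureReal_restrict_apply_univ, measureReal_def] at h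
      · filter_upwards [hptwise] with y hy
        rwa [Real.norm_eq_abs]
    rw [setAverage_eq, smul_eq_mul, abs_mul, abs_inv, abs_of_nonneg measureReal_nonneg]
    rw [Real.norm_eq_abs] at hnorm
    calc (volume (ball x r)).toReal⁻¹ * |∫ z in ball x r, (u₀ (φ z) - c) ∂volume|
        ≤ (volume (ball x r)).toReal⁻¹ * (M * (volume (ball x r)).toReal) :=
          mul_le_mul_of_nonneg_left hnorm (inv_nonneg.mpr hV.le)
      _ = M := by field_simp
  -- integral bound
  have hptwise2 : ∀ᵐ y ∂(volume.restrict (ball x r)),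
      ‖|u₀ (φ y) - A'| ^ p‖ ≤ (2 * M) ^ p := by
    filter_upwards [hptwise] with y hy
    rw [Real.norm_eq_abs, abs_of_nonneg (Real.rpow_nonneg (abs_nonneg _) _)]
    apply Real.rpow_le_rpow (abs_nonneg _) ?_ hp0.le
    have htri := abs_sub_le (u₀ (φ y)) c A'
    have h2 : |c - A'| ≤ M := by rwa [abs_sub_comm]
    linarith
  have hintle : ∫ y in ball x r, |u₀ (φ y) - A'| ^ p
      ≤ (2 * M) ^ p * (volume (ball x r)).toReal := by
    have h := norm_integral_le_of_norm_le_const (μ := volume.restrict (ball x r)) hptwise2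
    rw [measureReal_restrict_apply_univ, measureReal_def, Real.norm_eq_abs] at h
    exact le_trans (le_abs_self _) h
  -- final arithmetic
  set V := (volume (ball x r)).toReal with hVdef
  have hstep1 : (V ^ (-(1 + a * p / d)) *
      ∫ y in ball x r, |u₀ (φ y) - A'| ^ p) ^ (1 / p)
      ≤ (V ^ (-(1 + a * p / d)) * ((2 * M) ^ p * V)) ^ (1 / p) := by
    apply Real.rpow_le_rpow
    · apply mul_nonneg (Real.rpow_nonneg hV.le _)
      exact integral_nonneg fun y => Real.rpow_nonneg (abs_nonneg _) _
    · exact mul_le_mul_of_nonneg_left hintle (Real.rpow_nonneg hV.le _)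
    · positivity
  have hkey : V ^ (-(1 + a * p / d)) * ((2 * M) ^ p * V)
      = ((2 * M) * V ^ (-(a / (d:ℝ)))) ^ p := by
    rw [Real.mul_rpow (by positivity) (Real.rpow_nonneg hV.le _),
      ← Real.rpow_mul hV.le]
    have hVpow : V ^ (-(1 + a * p / d)) * V = V ^ (-(a / (d:ℝ)) * p) := by
      nth_rewrite 2 [← Real.rpow_one V]
      rw [← Real.rpow_add hV]
      congr 1
      field_simp
      ring
    calc V ^ (-(1 + a * p / ↑d)) * ((2 * M) ^ p * V)
        = (V ^ (-(1 + a * p / ↑d)) * V) * (2 * M) ^ p := by ring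
      _ = V ^ (-(a / (d:ℝ)) * p) * (2 * M) ^ p := by rw [hVpow]
      _ = (2 * M) ^ p * V ^ (-(a / (d:ℝ)) * p) := by ring
  have hVform : V = ω * r ^ (d:ℝ) := aux_vol hd x hr.le
  have hfinal_eq : 2 * M * V ^ (-(a / (d:ℝ)))
      = 2 * C1 * ω ^ (-(a / (d:ℝ))) * Real.exp (a * L * t) * N := by
    rw [hM, hRdef, hVform,
      Real.mul_rpow (Real.exp_pos _).le hr.le,
      Real.mul_rpow hω.le (Real.rpow_nonneg hr.le _),
      ← Real.rpow_mul hr.le, ← Real.exp_mul]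
    have hda : (d:ℝ) * (-(a / (d:ℝ))) = -a := by field_simp
    have harg : L * t * a = a * L * t := by ring
    rw [hda, harg, Real.rpow_neg hr.le a]
    have hrapos : 0 < r ^ a := Real.rpow_pos_of_pos hr a
    field_simp
  refine le_trans hstep1 (le_of_eq ?_)
  rw [hkey, one_div, Real.rpow_rpow_inv ?_ hp0.ne', hfinal_eq]
  exact mul_nonneg (by linarith) (Real.rpow_nonneg hV.le _)
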